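/- Let k ≥ 2 be an integer, a = π/k, and let q be a complex-valued integrable function on (0,π). Then for every nonzero complex number ρ, the characteristic function Δ_{0,1}(ρ²) := C(0,ρ)·S'(π,ρ) − S(0,ρ)·C'(π,ρ) satisfies Δ_{0,1}(ρ²) = cos(ρπ) + ρ^{−1}·∫_0^π W_{0,1}(t)·sin(ρt) dt, where W_{0,1} is the function associated with q. -/

import Mathlib

open MeasureTheory intervalIntegral

private lemma qII {q : ℝ → ℂ} (hq : IntegrableOn q (Set.Ioo 0 Real.pi))
    {c d : ℝ} (h0 : 0 ≤ c) (hcd : c ≤ d) (hd : d ≤ Real.pi) :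
    IntervalIntegrable q volume c d := by
  rw [intervalIntegrable_iff_integrableOn_Ioo_of_le hcd]
  exact hq.mono_set (Set.Ioo_subset_Ioo h0 hd)

private lemma qIIx {q : ℝ → ℂ} (hq : IntegrableOn q (Set.Ioo 0 Real.pi))
    {c d : ℝ} (h0 : 0 ≤ c) (hc : c ≤ Real.pi) (h0d : 0 ≤ d) (hd : d ≤ Real.pi) :
    IntervalIntegrable q volume c d := by
  rcases le_total c d with h | h
  · exact qII hq h0 h hd
  · exact (qII hq h0d h hc).symm

private lemma compAddR {q : ℝ → ℂ} {c e f : ℝ}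
    (h : IntervalIntegrable q volume (e + c) (f + c)) :
    IntervalIntegrable (fun t => q (t + c)) volume e f := by
  simpa using h.comp_add_right c

private lemma compSubL {q : ℝ → ℂ} {c e f : ℝ}
    (h : IntervalIntegrable q volume (c - e) (c - f)) :
    IntervalIntegrable (fun t => q (c - t)) volume e f := by
  simpa using h.comp_sub_left c

private lemma compSubR {q : ℝ → ℂ} {c e f : ℝ}
    (h : IntervalIntegrable q volume (e - c) (f - c)) :
    IntervalIntegrable (fun t => q (t - c)) volume e f := by
  simpa using h.comp_sub_right c

private lemma intCongrIoo {f g : ℝ → ℂ} {c d : ℝ} (hcd : c ≤ d)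
    (heq : ∀ t ∈ Set.Ioo c d, f t = g t) :
    ∫ t in c..d, f t = ∫ t in c..d, g t := by
  apply intervalIntegral.integral_congr_ae
  have hd' : ∀ᵐ x : ℝ, x ≠ d := by simp [ae_iff]
  filter_upwards [hd'] with x hx hmem
  rw [Set.uIoc_of_le hcd] at hmem
  exact heq x ⟨hmem.1, lt_of_le_of_ne hmem.2 hx⟩

private lemma IICongrIoo {f g : ℝ → ℂ} {c d : ℝ} (hcd : c ≤ d)
    (h : IntervalIntegrable f volume c d)
    (heq : ∀ t ∈ Set.Ioo c d, f t = g t) :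
    IntervalIntegrable g volume c d := by
  rw [intervalIntegrable_iff_integrableOn_Ioo_of_le hcd] at h ⊢
  exact h.congr_fun (fun x hx => heq x hx) measurableSet_Ioo

/-- The function `W_{0,1}` associated with `q`, where `a = π/k`. -/
noncomputable def W01 (k : ℕ) (q : ℝ → ℂ) (t : ℝ) : ℂ :=
  let a := Real.pi / k
  if t ∈ Set.Ioo 0 a then
    (q (((k : ℝ) - 1) * a + t) - q (((k : ℝ) - 1) * a - t)) / 2
  else if t ∈ Set.Ioo a (((k : ℝ) - 1) * a) then
    (q (((k : ℝ) + 1) * a - t) - q (((k : ℝ) - 1) * a - t)) / 2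
  else if t ∈ Set.Ioo (((k : ℝ) - 1) * a) Real.pi then
    (q (((k : ℝ) + 1) * a - t) + q (t - ((k : ℝ) - 1) * a)) / 2
  else 0

/-- The solution `C(x,ρ)` of the frozen-argument equation with
`C(a,ρ) = 1`, `C'(a,ρ) = 0`. -/
noncomputable def Cfun (a : ℝ) (q : ℝ → ℂ) (ρ : ℂ) (x : ℝ) : ℂ :=
  Complex.cos (ρ * ((x - a : ℝ) : ℂ)) +
    ρ⁻¹ * ∫ t in a..x, Complex.sin (ρ * ((x - t : ℝ) : ℂ)) * q t

/-- The `x`-derivative `C'(x,ρ)`. -/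
noncomputable def Cfun' (a : ℝ) (q : ℝ → ℂ) (ρ : ℂ) (x : ℝ) : ℂ :=
  -ρ * Complex.sin (ρ * ((x - a : ℝ) : ℂ)) +
    ∫ t in a..x, Complex.cos (ρ * ((x - t : ℝ) : ℂ)) * q t

/-- The solution `S(x,ρ)` with `S(a,ρ) = 0`, `S'(a,ρ) = 1`. -/
noncomputable def Sfun (a : ℝ) (ρ : ℂ) (x : ℝ) : ℂ :=
  Complex.sin (ρ * ((x - a : ℝ) : ℂ)) / ρ

/-- The `x`-derivative `S'(x,ρ)`. -/
noncomputable def Sfun' (a : ℝ) (ρ : ℂ) (x : ℝ) : ℂ :=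
  Complex.cos (ρ * ((x - a : ℝ) : ℂ))

set_option maxHeartbeats 1000000 in
theorem charFunction_rep_dirichlet_neumann (k : ℕ) (hk : 2 ≤ k)
    (q : ℝ → ℂ) (hq : IntegrableOn q (Set.Ioo 0 Real.pi))
    (ρ : ℂ) (hρ : ρ ≠ 0) :
    Cfun (Real.pi / k) q ρ 0 * Sfun' (Real.pi / k) ρ Real.pi -
      Sfun (Real.pi / k) ρ 0 * Cfun' (Real.pi / k) q ρ Real.pi =
    Complex.cos (ρ * Real.pi) +
      ρ⁻¹ * ∫ t in (0:ℝ)..Real.pi, W01 k q t * Complex.sin (ρ * (t : ℂ)) := by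
  have hπ := Real.pi_pos
  set a : ℝ := Real.pi / (k : ℝ) with ha_def
  have hk0 : (0 : ℝ) < (k : ℝ) := by
    have : 0 < k := lt_of_lt_of_le (by norm_num) hk
    exact_mod_cast this
  have hk2 : (2 : ℝ) ≤ (k : ℝ) := by exact_mod_cast hk
  have ha : 0 < a := by rw [ha_def]; positivity
  have hka : (k : ℝ) * a = Real.pi := by rw [ha_def]; field_simp
  have hm : ((k : ℝ) - 1) * a = Real.pi - a := by rw [sub_mul, one_mul, hka]
  have hp : ((k : ℝ) + 1) * a = Real.pi + a := by rw [add_mul, one_mul, hka]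
  have h2a : 2 * a ≤ Real.pi := by
    nlinarith [mul_nonneg (by linarith : (0:ℝ) ≤ (k:ℝ) - 2) ha.le]
  -- the branch descriptions of W01
  have hW1 : ∀ t ∈ Set.Ioo (0:ℝ) a,
      W01 k q t = (q (t + (Real.pi - a)) - q (Real.pi - a - t)) / 2 := by
    intro t ht
    simp only [W01, ← ha_def, hm, hp]
    rw [if_pos ht, add_comm (Real.pi - a) t]
  have hW2 : ∀ t ∈ Set.Ioo a (Real.pi - a),
      W01 k q t = (q (Real.pi + a - t) - q (Real.pi - a - t)) / 2 := by
    intro t ht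
    simp only [W01, ← ha_def, hm, hp]
    rw [if_neg (fun h => absurd h.2 (not_lt.mpr ht.1.le)), if_pos ht]
  have hW3 : ∀ t ∈ Set.Ioo (Real.pi - a) Real.pi,
      W01 k q t = (q (Real.pi + a - t) + q (t - (Real.pi - a))) / 2 := by
    intro t ht
    have h1 : ¬ t ∈ Set.Ioo (0:ℝ) a := fun h => absurd h.2 (by linarith [ht.1])
    have h2 : ¬ t ∈ Set.Ioo a (Real.pi - a) := fun h => absurd h.2 (not_lt.mpr ht.1.le)
    simp only [W01, ← ha_def, hm, hp]
    rw [if_neg h1, if_neg h2, if_pos ht]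
  -- interval integrability of the composed pieces
  have m1 : IntervalIntegrable (fun t => q (t + (Real.pi - a)) * (Complex.sin (ρ * (t:ℂ)) / 2))
      volume 0 a :=
    (compAddR (qIIx hq (by linarith) (by linarith) (by linarith) (by linarith))).mul_continuousOn
      (Continuous.continuousOn (by fun_prop))
  have m2 : IntervalIntegrable (fun t => q (Real.pi - a - t) * (Complex.sin (ρ * (t:ℂ)) / 2))
      volume 0 a :=
    (compSubL (qIIx hq (by linarith) (by linarith) (by linarith) (by linarith))).mul_continuousOn
      (Continuous.continuousOn (by fun_prop))
  have m3 : IntervalIntegrable (fun t => q (Real.pi + a - t) * (Complex.sin (ρ * (t:ℂ)) / 2))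
      volume a (Real.pi - a) :=
    (compSubL (qIIx hq (by linarith) (by linarith) (by linarith) (by linarith))).mul_continuousOn
      (Continuous.continuousOn (by fun_prop))
  have m4 : IntervalIntegrable (fun t => q (Real.pi - a - t) * (Complex.sin (ρ * (t:ℂ)) / 2))
      volume a (Real.pi - a) :=
    (compSubL (qIIx hq (by linarith) (by linarith) (by linarith) (by linarith))).mul_continuousOn
      (Continuous.continuousOn (by fun_prop))
  have m5 : IntervalIntegrable (fun t => q (Real.pi + a - t) * (Complex.sin (ρ * (t:ℂ)) / 2))
      volume (Real.pi - a) Real.pi :=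
    (compSubL (qIIx hq (by linarith) (by linarith) (by linarith) (by linarith))).mul_continuousOn
      (Continuous.continuousOn (by fun_prop))
  have m6 : IntervalIntegrable (fun t => q (t - (Real.pi - a)) * (Complex.sin (ρ * (t:ℂ)) / 2))
      volume (Real.pi - a) Real.pi :=
    (compSubR (qIIx hq (by linarith) (by linarith) (by linarith) (by linarith))).mul_continuousOn
      (Continuous.continuousOn (by fun_prop))
  -- integrability of the target-form integrands
  have hG1 : ∀ {c d : ℝ}, 0 ≤ c → c ≤ Real.pi → 0 ≤ d → d ≤ Real.pi →
      IntervalIntegrable (fun s => q s * (Complex.sin (ρ * ((s + (Real.pi - a) : ℝ):ℂ)) / 2))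
        volume c d :=
    fun h1 h2 h3 h4 => (qIIx hq h1 h2 h3 h4).mul_continuousOn
      (Continuous.continuousOn (by fun_prop))
  have hG2 : ∀ {c d : ℝ}, 0 ≤ c → c ≤ Real.pi → 0 ≤ d → d ≤ Real.pi →
      IntervalIntegrable (fun s => q s * (Complex.sin (ρ * ((Real.pi + a - s : ℝ):ℂ)) / 2))
        volume c d :=
    fun h1 h2 h3 h4 => (qIIx hq h1 h2 h3 h4).mul_continuousOn
      (Continuous.continuousOn (by fun_prop))
  have hG3 : ∀ {c d : ℝ}, 0 ≤ c → c ≤ Real.pi → 0 ≤ d → d ≤ Real.pi →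
      IntervalIntegrable (fun s => q s * (Complex.sin (ρ * ((Real.pi - a - s : ℝ):ℂ)) / 2))
        volume c d :=
    fun h1 h2 h3 h4 => (qIIx hq h1 h2 h3 h4).mul_continuousOn
      (Continuous.continuousOn (by fun_prop))
  -- integrability of W01 * sin on the three pieces
  have w1 : IntervalIntegrable (fun t => W01 k q t * Complex.sin (ρ * (t:ℂ))) volume 0 a :=
    IICongrIoo ha.le (m1.sub m2) (fun t ht => by rw [hW1 t ht]; ring)
  have w2 : IntervalIntegrable (fun t => W01 k q t * Complex.sin (ρ * (t:ℂ))) volume a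
      (Real.pi - a) :=
    IICongrIoo (by linarith) (m3.sub m4) (fun t ht => by rw [hW2 t ht]; ring)
  have w3 : IntervalIntegrable (fun t => W01 k q t * Complex.sin (ρ * (t:ℂ))) volume
      (Real.pi - a) Real.pi :=
    IICongrIoo (by linarith) (m5.add m6) (fun t ht => by rw [hW3 t ht]; ring)
  -- change of variables
  have E1 : (∫ t in (0:ℝ)..a, q (t + (Real.pi - a)) * (Complex.sin (ρ * (t:ℂ)) / 2))
      = -∫ s in (Real.pi - a)..Real.pi,
          q s * (Complex.sin (ρ * ((Real.pi - a - s : ℝ):ℂ)) / 2) := by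
    rw [← intervalIntegral.integral_neg]
    have h := integral_comp_add_right (a := (0:ℝ)) (b := a)
      (fun s => -(q s * (Complex.sin (ρ * ((Real.pi - a - s : ℝ):ℂ)) / 2))) (Real.pi - a)
    rw [show (0:ℝ) + (Real.pi - a) = Real.pi - a by ring,
      show a + (Real.pi - a) = Real.pi by ring] at h
    rw [← h]
    apply intervalIntegral.integral_congr
    intro t _
    simp only []
    rw [show Real.pi - a - (t + (Real.pi - a)) = -t by ring]
    push_cast
    simp only [mul_neg, Complex.sin_neg]
    ring
  have E2 : (∫ t in (0:ℝ)..a, q (Real.pi - a - t) * (Complex.sin (ρ * (t:ℂ)) / 2))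
      = ∫ s in (Real.pi - 2*a)..(Real.pi - a),
          q s * (Complex.sin (ρ * ((Real.pi - a - s : ℝ):ℂ)) / 2) := by
    have h := integral_comp_sub_left (a := (0:ℝ)) (b := a)
      (fun s => q s * (Complex.sin (ρ * ((Real.pi - a - s : ℝ):ℂ)) / 2)) (Real.pi - a)
    rw [show Real.pi - a - a = Real.pi - 2*a by ring,
      show Real.pi - a - (0:ℝ) = Real.pi - a by ring] at h
    rw [← h]
    apply intervalIntegral.integral_congr
    intro t _
    simp only []
    rw [show Real.pi - a - (Real.pi - a - t) = t by ring]
  have E3 : (∫ t in a..(Real.pi - a), q (Real.pi + a - t) * (Complex.sin (ρ * (t:ℂ)) / 2))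
      = ∫ s in (2*a)..Real.pi,
          q s * (Complex.sin (ρ * ((Real.pi + a - s : ℝ):ℂ)) / 2) := by
    have h := integral_comp_sub_left (a := a) (b := Real.pi - a)
      (fun s => q s * (Complex.sin (ρ * ((Real.pi + a - s : ℝ):ℂ)) / 2)) (Real.pi + a)
    rw [show Real.pi + a - (Real.pi - a) = 2*a by ring,
      show Real.pi + a - a = Real.pi by ring] at h
    rw [← h]
    apply intervalIntegral.integral_congr
    intro t _
    simp only []
    rw [show Real.pi + a - (Real.pi + a - t) = t by ring]
  have E4 : (∫ t in a..(Real.pi - a), q (Real.pi - a - t) * (Complex.sin (ρ * (t:ℂ)) / 2))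
      = ∫ s in (0:ℝ)..(Real.pi - 2*a),
          q s * (Complex.sin (ρ * ((Real.pi - a - s : ℝ):ℂ)) / 2) := by
    have h := integral_comp_sub_left (a := a) (b := Real.pi - a)
      (fun s => q s * (Complex.sin (ρ * ((Real.pi - a - s : ℝ):ℂ)) / 2)) (Real.pi - a)
    rw [show Real.pi - a - (Real.pi - a) = (0:ℝ) by ring,
      show Real.pi - a - a = Real.pi - 2*a by ring] at h
    rw [← h]
    apply intervalIntegral.integral_congr
    intro t _
    simp only []
    rw [show Real.pi - a - (Real.pi - a - t) = t by ring]
  have E5 : (∫ t in (Real.pi - a)..Real.pi, q (Real.pi + a - t) * (Complex.sin (ρ * (t:ℂ)) / 2))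
      = ∫ s in a..(2*a),
          q s * (Complex.sin (ρ * ((Real.pi + a - s : ℝ):ℂ)) / 2) := by
    have h := integral_comp_sub_left (a := Real.pi - a) (b := Real.pi)
      (fun s => q s * (Complex.sin (ρ * ((Real.pi + a - s : ℝ):ℂ)) / 2)) (Real.pi + a)
    rw [show Real.pi + a - Real.pi = a by ring,
      show Real.pi + a - (Real.pi - a) = 2*a by ring] at h
    rw [← h]
    apply intervalIntegral.integral_congr
    intro t _
    simp only []
    rw [show Real.pi + a - (Real.pi + a - t) = t by ring]
  have E6 : (∫ t in (Real.pi - a)..Real.pi, q (t - (Real.pi - a)) * (Complex.sin (ρ * (t:ℂ)) / 2))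
      = ∫ s in (0:ℝ)..a,
          q s * (Complex.sin (ρ * ((s + (Real.pi - a) : ℝ):ℂ)) / 2) := by
    have h := integral_comp_sub_right (a := Real.pi - a) (b := Real.pi)
      (fun s => q s * (Complex.sin (ρ * ((s + (Real.pi - a) : ℝ):ℂ)) / 2)) (Real.pi - a)
    rw [show Real.pi - a - (Real.pi - a) = (0:ℝ) by ring,
      show Real.pi - (Real.pi - a) = a by ring] at h
    rw [← h]
    apply intervalIntegral.integral_congr
    intro t _
    simp only []
    rw [show t - (Real.pi - a) + (Real.pi - a) = t by ring]
  -- joins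
  have J2 : (∫ s in a..(2*a), q s * (Complex.sin (ρ * ((Real.pi + a - s : ℝ):ℂ)) / 2))
      + (∫ s in (2*a)..Real.pi, q s * (Complex.sin (ρ * ((Real.pi + a - s : ℝ):ℂ)) / 2))
      = ∫ s in a..Real.pi, q s * (Complex.sin (ρ * ((Real.pi + a - s : ℝ):ℂ)) / 2) :=
    integral_add_adjacent_intervals
      (hG2 (by linarith) (by linarith) (by linarith) (by linarith))
      (hG2 (by linarith) (by linarith) (by linarith) (by linarith))
  have J3a : (∫ s in (0:ℝ)..(Real.pi - 2*a), q s * (Complex.sin (ρ * ((Real.pi - a - s : ℝ):ℂ)) / 2))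
      + (∫ s in (Real.pi - 2*a)..(Real.pi - a), q s * (Complex.sin (ρ * ((Real.pi - a - s : ℝ):ℂ)) / 2))
      = ∫ s in (0:ℝ)..(Real.pi - a), q s * (Complex.sin (ρ * ((Real.pi - a - s : ℝ):ℂ)) / 2) :=
    integral_add_adjacent_intervals
      (hG3 (by linarith) (by linarith) (by linarith) (by linarith))
      (hG3 (by linarith) (by linarith) (by linarith) (by linarith))
  have J3b : (∫ s in (0:ℝ)..(Real.pi - a), q s * (Complex.sin (ρ * ((Real.pi - a - s : ℝ):ℂ)) / 2))
      + (∫ s in (Real.pi - a)..Real.pi, q s * (Complex.sin (ρ * ((Real.pi - a - s : ℝ):ℂ)) / 2))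
      = ∫ s in (0:ℝ)..Real.pi, q s * (Complex.sin (ρ * ((Real.pi - a - s : ℝ):ℂ)) / 2) :=
    integral_add_adjacent_intervals
      (hG3 (by linarith) (by linarith) (by linarith) (by linarith))
      (hG3 (by linarith) (by linarith) (by linarith) (by linarith))
  -- the W-side computation
  have HW : (∫ t in (0:ℝ)..Real.pi, W01 k q t * Complex.sin (ρ * (t:ℂ)))
      = (∫ s in (0:ℝ)..a, q s * (Complex.sin (ρ * ((s + (Real.pi - a) : ℝ):ℂ)) / 2))
        + (∫ s in a..Real.pi, q s * (Complex.sin (ρ * ((Real.pi + a - s : ℝ):ℂ)) / 2))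
        - (∫ s in (0:ℝ)..Real.pi, q s * (Complex.sin (ρ * ((Real.pi - a - s : ℝ):ℂ)) / 2)) := by
    rw [← integral_add_adjacent_intervals (a := (0:ℝ)) (b := a) (c := Real.pi) w1 (w2.trans w3),
      ← integral_add_adjacent_intervals (a := a) (b := Real.pi - a) (c := Real.pi) w2 w3]
    rw [intCongrIoo ha.le (fun t ht => by rw [hW1 t ht]; ring :
        ∀ t ∈ Set.Ioo (0:ℝ) a, W01 k q t * Complex.sin (ρ * (t:ℂ))
          = q (t + (Real.pi - a)) * (Complex.sin (ρ * (t:ℂ)) / 2)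
            - q (Real.pi - a - t) * (Complex.sin (ρ * (t:ℂ)) / 2)),
      intCongrIoo (by linarith : a ≤ Real.pi - a) (fun t ht => by rw [hW2 t ht]; ring :
        ∀ t ∈ Set.Ioo a (Real.pi - a), W01 k q t * Complex.sin (ρ * (t:ℂ))
          = q (Real.pi + a - t) * (Complex.sin (ρ * (t:ℂ)) / 2)
            - q (Real.pi - a - t) * (Complex.sin (ρ * (t:ℂ)) / 2)),
      intCongrIoo (by linarith : Real.pi - a ≤ Real.pi) (fun t ht => by rw [hW3 t ht]; ring :
        ∀ t ∈ Set.Ioo (Real.pi - a) Real.pi, W01 k q t * Complex.sin (ρ * (t:ℂ))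
          = q (Real.pi + a - t) * (Complex.sin (ρ * (t:ℂ)) / 2)
            + q (t - (Real.pi - a)) * (Complex.sin (ρ * (t:ℂ)) / 2))]
    rw [intervalIntegral.integral_sub m1 m2, intervalIntegral.integral_sub m3 m4,
      intervalIntegral.integral_add m5 m6, E1, E2, E3, E4, E5, E6]
    linear_combination J2 - J3a - J3b
  -- the trigonometric side
  have HT1 : Complex.cos (ρ * ((Real.pi - a : ℝ):ℂ)) * ∫ t in (0:ℝ)..a, Complex.sin (ρ * (t:ℂ)) * q t
      = (∫ s in (0:ℝ)..a, q s * (Complex.sin (ρ * ((s + (Real.pi - a) : ℝ):ℂ)) / 2))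
        - (∫ s in (0:ℝ)..a, q s * (Complex.sin (ρ * ((Real.pi - a - s : ℝ):ℂ)) / 2)) := by
    rw [← intervalIntegral.integral_const_mul,
      ← intervalIntegral.integral_sub
        (hG1 (by linarith) (by linarith) (by linarith) (by linarith))
        (hG3 (by linarith) (by linarith) (by linarith) (by linarith))]
    apply intervalIntegral.integral_congr
    intro t _
    simp only []
    push_cast
    simp only [mul_add, mul_sub, Complex.sin_add, Complex.sin_sub, Complex.cos_add,
      Complex.cos_sub]
    ring
  have HT2 : Complex.sin (ρ * (a:ℂ)) * ∫ t in a..Real.pi,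
        Complex.cos (ρ * ((Real.pi - t : ℝ):ℂ)) * q t
      = (∫ s in a..Real.pi, q s * (Complex.sin (ρ * ((Real.pi + a - s : ℝ):ℂ)) / 2))
        - (∫ s in a..Real.pi, q s * (Complex.sin (ρ * ((Real.pi - a - s : ℝ):ℂ)) / 2)) := by
    rw [← intervalIntegral.integral_const_mul,
      ← intervalIntegral.integral_sub
        (hG2 (by linarith) (by linarith) (by linarith) (by linarith))
        (hG3 (by linarith) (by linarith) (by linarith) (by linarith))]
    apply intervalIntegral.integral_congr
    intro t _
    simp only []
    push_cast
    simp only [mul_add, mul_sub, Complex.sin_add, Complex.sin_sub, Complex.cos_add,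
      Complex.cos_sub]
    ring
  have J3c : (∫ s in (0:ℝ)..a, q s * (Complex.sin (ρ * ((Real.pi - a - s : ℝ):ℂ)) / 2))
      + (∫ s in a..Real.pi, q s * (Complex.sin (ρ * ((Real.pi - a - s : ℝ):ℂ)) / 2))
      = ∫ s in (0:ℝ)..Real.pi, q s * (Complex.sin (ρ * ((Real.pi - a - s : ℝ):ℂ)) / 2) :=
    integral_add_adjacent_intervals
      (hG3 (by linarith) (by linarith) (by linarith) (by linarith))
      (hG3 (by linarith) (by linarith) (by linarith) (by linarith))
  have key : (∫ t in (0:ℝ)..Real.pi, W01 k q t * Complex.sin (ρ * (t:ℂ)))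
      = Complex.cos (ρ * ((Real.pi - a : ℝ):ℂ)) * (∫ t in (0:ℝ)..a, Complex.sin (ρ * (t:ℂ)) * q t)
        + Complex.sin (ρ * (a:ℂ)) * ∫ t in a..Real.pi,
            Complex.cos (ρ * ((Real.pi - t : ℝ):ℂ)) * q t := by
    rw [HW, HT1, HT2]
    linear_combination J3c
  -- final assembly
  have hflip : (∫ t in a..(0:ℝ), Complex.sin (ρ * ((0 - t : ℝ):ℂ)) * q t)
      = ∫ t in (0:ℝ)..a, Complex.sin (ρ * (t:ℂ)) * q t := by
    rw [intervalIntegral.integral_symm, ← intervalIntegral.integral_neg]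
    apply intervalIntegral.integral_congr
    intro t _
    simp only []
    rw [show (0:ℝ) - t = -t by ring]
    push_cast
    simp only [mul_neg, Complex.sin_neg]
    ring
  have hcos : Complex.cos (ρ * (a:ℂ)) * Complex.cos (ρ * ((Real.pi:ℂ) - (a:ℂ)))
      - Complex.sin (ρ * (a:ℂ)) * Complex.sin (ρ * ((Real.pi:ℂ) - (a:ℂ)))
      = Complex.cos (ρ * (Real.pi:ℂ)) := by
    rw [← Complex.cos_add]
    congr 1
    ring
  have hc0 : Complex.cos (ρ * ((0 - a : ℝ):ℂ)) = Complex.cos (ρ * (a:ℂ)) := by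
    rw [show ((0 - a : ℝ):ℂ) = -(a:ℂ) by push_cast; ring, mul_neg, Complex.cos_neg]
  have hs0 : Complex.sin (ρ * ((0 - a : ℝ):ℂ)) = -Complex.sin (ρ * (a:ℂ)) := by
    rw [show ((0 - a : ℝ):ℂ) = -(a:ℂ) by push_cast; ring, mul_neg, Complex.sin_neg]
  simp only [Cfun, Cfun', Sfun, Sfun']
  rw [hflip, hc0, hs0, key]
  field_simp
  push_cast
  linear_combination ρ * hcos
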